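/- Let w = {g_1,...,g_{2r}} (r ≥ 2) be a non-split even closed walk in a graph with loops, with vertex sequence x_{i_1}, x_{i_2}, ..., x_{i_{2r}} (so g_j joins x_{i_j} and x_{i_{j+1}}, indices mod 2r). If x_{i_j} = x_{i_l} with 1 ≤ j < l ≤ 2r, then (1) x_{i_k} ≠ x_{i_j} for all k ≠ j, l, and (2) l - j is odd. -/
import Mathlib


namespace Polar

variable {V : Type*}

/-- `vtx` is (the vertex sequence of) a closed walk of length `t` in the graph with loops
whose edge set is `E`; the `j`-th edge of the walk is `s(vtx j, vtx (j+1))`. -/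
def IsClosedWalk (E : Set (Sym2 V)) {t : ℕ} (vtx : ZMod t → V) : Prop :=
  ∀ j : ZMod t, s(vtx j, vtx (j + 1)) ∈ E

/-- The set of edges of a closed walk (its support). -/
def walkEdges {t : ℕ} (vtx : ZMod t → V) : Set (Sym2 V) :=
  {e | ∃ j : ZMod t, e = s(vtx j, vtx (j + 1))}

/-- The multiplicity with which an edge is traversed by a closed walk. -/
noncomputable def edgeMult {t : ℕ} (vtx : ZMod t → V) (e : Sym2 V) : ℕ :=
  {j : ZMod t | s(vtx j, vtx (j + 1)) = e}.ncard

/-- The multiset of edges of a closed walk, counted with multiplicity. -/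
def edgeMS {t : ℕ} (vtx : ZMod t → V) : Multiset (Sym2 V) :=
  (Multiset.range t).map fun j => s(vtx (j : ZMod t), vtx ((j : ZMod t) + 1))

/-- An even closed walk of length `2r` splits if, after a cyclic rotation, it decomposes at a
repeated vertex into two smaller even closed walks, i.e. some vertex recurs at an even
(nonzero, proper) distance along the walk. -/
def Splits {r : ℕ} (vtx : ZMod (2 * r) → V) : Prop :=
  ∃ (j : ZMod (2 * r)) (s : ℕ), 0 < s ∧ s < r ∧ vtx j = vtx (j + (2 * s : ℕ))

/-- A non-split even closed walk. -/
def NonSplit {r : ℕ} (vtx : ZMod (2 * r) → V) : Prop := ¬ Splits vtx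

/-- A cycle in a graph with loops: a closed walk with no vertex repetition.
Loops are the cycles of length `1`; there is no cycle of length `2`. -/
structure Cyc (V : Type*) (E : Set (Sym2 V)) where
  len : ℕ
  pos : 0 < len
  not_two : len ≠ 2
  vtx : ZMod len → V
  inj : Function.Injective vtx
  mem : ∀ j, s(vtx j, vtx (j + 1)) ∈ E

namespace Cyc
variable {E : Set (Sym2 V)}

def edges (c : Cyc V E) : Set (Sym2 V) := {e | ∃ j, e = s(c.vtx j, c.vtx (j + 1))}

def vertices (c : Cyc V E) : Set V := Set.range c.vtx

/-- A loop, regarded as a (degenerate odd) cycle. -/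
def IsLoop (c : Cyc V E) : Prop := c.len = 1

end Cyc

/-- A cycle arrangement: a connected subgraph consisting of a family of constituent cycles
such that (C1) any two constituent cycles have mutually disjoint edges, (C2) any two
constituent cycles share at most one vertex, and (C3) any vertex belongs to at most two
constituent cycles. -/
structure CycArr (V : Type*) (E : Set (Sym2 V)) where
  num : ℕ
  npos : 0 < num
  cyc : Fin num → Cyc V E
  edgeDisj : ∀ i j, i ≠ j → (cyc i).edges ∩ (cyc j).edges = ∅
  shareAtMostOne : ∀ i j, i ≠ j → ((cyc i).vertices ∩ (cyc j).vertices).Subsingleton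
  atMostTwo : ∀ v i j l, v ∈ (cyc i).vertices → v ∈ (cyc j).vertices →
    v ∈ (cyc l).vertices → i = j ∨ i = l ∨ j = l
  conn : ∀ u v, u ∈ ⋃ i, (cyc i).vertices → v ∈ ⋃ i, (cyc i).vertices →
    Relation.ReflTransGen (fun a b => ∃ i, s(a, b) ∈ (cyc i).edges) u v

namespace CycArr
variable {E : Set (Sym2 V)}

def edges (A : CycArr V E) : Set (Sym2 V) := ⋃ i, (A.cyc i).edges

def vertices (A : CycArr V E) : Set V := ⋃ i, (A.cyc i).vertices

/-- The arrangement is even when the total number of edges of its constituent cycles is even. -/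
def EvenArr (A : CycArr V E) : Prop := Even (∑ i, (A.cyc i).len)

/-- A simple vertex: one belonging to exactly one constituent cycle. -/
def Simple (A : CycArr V E) (v : V) : Prop :=
  v ∈ A.vertices ∧ ∀ i j, v ∈ (A.cyc i).vertices → v ∈ (A.cyc j).vertices → i = j

end CycArr

/-- A (nonempty, vertex-injective) path in a graph with loops. -/
structure PathIn (V : Type*) (E : Set (Sym2 V)) where
  len : ℕ
  pos : 0 < len
  vtx : Fin (len + 1) → V
  inj : Function.Injective vtx
  mem : ∀ j : Fin len, s(vtx j.castSucc, vtx j.succ) ∈ E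

namespace PathIn
variable {E : Set (Sym2 V)}

def vertices (p : PathIn V E) : Set V := Set.range p.vtx

def edges (p : PathIn V E) : Set (Sym2 V) :=
  {e | ∃ j : Fin p.len, e = s(p.vtx j.castSucc, p.vtx j.succ)}

/-- An extremal (first or last) vertex of the path. -/
def Extremal (p : PathIn V E) (v : V) : Prop := v = p.vtx 0 ∨ v = p.vtx (Fin.last p.len)

end PathIn

/-- A molecule: `r ≥ 2` structural cycle arrangements joined by `r - 1` structural paths,
subject to conditions (M1)–(M6). -/
structure Molecule (V : Type*) (E : Set (Sym2 V)) where
  r : ℕ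
  hr : 2 ≤ r
  ca : Fin r → CycArr V E
  path : Fin (r - 1) → PathIn V E
  M1 : ∀ i j, i ≠ j → (ca i).edges ∩ (ca j).edges = ∅
  M2 : ∀ i j, i ≠ j → (path i).vertices ∩ (path j).vertices = ∅
  M3 : ∀ i j, ((ca i).vertices ∩ (path j).vertices).Subsingleton
  M3e : ∀ i j, (ca i).edges ∩ (path j).edges = ∅
  M4a : ∀ i, ∃ j, ((ca i).vertices ∩ (path j).vertices).Nonempty
  M4b : ∀ j, ∃ i₁ i₂, i₁ ≠ i₂ ∧ ((ca i₁).vertices ∩ (path j).vertices).Nonempty ∧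
    ((ca i₂).vertices ∩ (path j).vertices).Nonempty ∧
    ∀ i, ((ca i).vertices ∩ (path j).vertices).Nonempty → i = i₁ ∨ i = i₂
  M5 : ∀ v i j l, v ∈ (ca i).vertices → v ∈ (ca j).vertices → v ∈ (ca l).vertices →
    i = j ∨ i = l ∨ j = l
  M6a : ∀ v i j, i ≠ j → v ∈ (ca i).vertices → v ∈ (ca j).vertices →
    (ca i).Simple v ∧ (ca j).Simple v
  M6b : ∀ v i j, v ∈ (ca i).vertices → v ∈ (path j).vertices →
    (ca i).Simple v ∧ (path j).Extremal v
  conn : ∀ u v, u ∈ (⋃ i, (ca i).vertices) ∪ ⋃ j, (path j).vertices →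
    v ∈ (⋃ i, (ca i).vertices) ∪ ⋃ j, (path j).vertices →
    Relation.ReflTransGen
      (fun a b => (∃ i, s(a, b) ∈ (ca i).edges) ∨ ∃ j, s(a, b) ∈ (path j).edges) u v

namespace Molecule
variable {E : Set (Sym2 V)}

def cycEdges (M : Molecule V E) : Set (Sym2 V) := ⋃ i, (M.ca i).edges

def pathEdges (M : Molecule V E) : Set (Sym2 V) := ⋃ j, (M.path j).edges

def edges (M : Molecule V E) : Set (Sym2 V) := M.cycEdges ∪ M.pathEdges

def vertices (M : Molecule V E) : Set V :=
  (⋃ i, (M.ca i).vertices) ∪ ⋃ j, (M.path j).vertices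

/-- The molecule is even when the total number of edges of its constituent cycles is even. -/
def EvenMol (M : Molecule V E) : Prop := Even (∑ i, ∑ c, ((M.ca i).cyc c).len)

end Molecule

/-- A closed walk realizes (is supported on) a cycle arrangement if it traverses every edge
of the arrangement exactly once and no other edge. -/
def RealizesCA {E : Set (Sym2 V)} (A : CycArr V E) {t : ℕ} (vtx : ZMod t → V) : Prop :=
  IsClosedWalk E vtx ∧ (∀ e ∈ A.edges, edgeMult vtx e = 1) ∧
    ∀ e, e ∉ A.edges → edgeMult vtx e = 0

/-- A closed walk realizes (is supported on) a molecule if it traverses every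
constituent-cycle edge once, every structural-path edge twice, and no other edge. -/
def RealizesMol {E : Set (Sym2 V)} (M : Molecule V E) {t : ℕ} (vtx : ZMod t → V) : Prop :=
  IsClosedWalk E vtx ∧ (∀ e ∈ M.cycEdges, edgeMult vtx e = 1) ∧
    (∀ e ∈ M.pathEdges, edgeMult vtx e = 2) ∧
    ∀ e, e ∉ M.edges → edgeMult vtx e = 0

/-- Decomposability of an even closed walk: there are squarefree edges `h 0, …, h (t-1)` of the
graph, supported on vertices of the walk, such that adding each of them twice to the edge
sequence one obtains an even closed walk splitting into two smaller even closed walks, neither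
containing the original walk, each of whose edge sequences contains all the `h j`. -/
def Decomposable (E : Set (Sym2 V)) {r : ℕ} (vtx : ZMod (2 * r) → V) : Prop :=
  ∃ (t : ℕ) (h : Fin t → Sym2 V), 0 < t ∧
    (∀ j, h j ∈ E) ∧ (∀ j, ¬ (h j).IsDiag) ∧
    (∀ j, ∀ v ∈ h j, v ∈ Set.range vtx) ∧
    ∃ (a b : ℕ) (w₁ : ZMod (2 * a) → V) (w₂ : ZMod (2 * b) → V),
      0 < a ∧ 0 < b ∧ a < r + t ∧ b < r + t ∧
      IsClosedWalk E w₁ ∧ IsClosedWalk E w₂ ∧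
      (Set.range w₁ ∩ Set.range w₂).Nonempty ∧
      edgeMS w₁ + edgeMS w₂ = edgeMS vtx + 2 • (Finset.univ.val.map h) ∧
      (∀ j, h j ∈ edgeMS w₁) ∧ (∀ j, h j ∈ edgeMS w₂) ∧
      ¬ edgeMS vtx ≤ edgeMS w₁ ∧ ¬ edgeMS vtx ≤ edgeMS w₂

/-- A bow tie: two edge-disjoint odd cycles (possibly loops) joined by a path, which may
degenerate to a single vertex (`plen = 0`, the path-degenerate case). -/
structure BowTie (V : Type*) (E : Set (Sym2 V)) where
  c1 : Cyc V E
  c2 : Cyc V E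
  odd1 : Odd c1.len
  odd2 : Odd c2.len
  edisj : c1.edges ∩ c2.edges = ∅
  plen : ℕ
  pvtx : Fin (plen + 1) → V
  pinj : Function.Injective pvtx
  pmem : ∀ j : Fin plen, s(pvtx j.castSucc, pvtx j.succ) ∈ E
  hstart : pvtx 0 ∈ c1.vertices
  hstop : pvtx (Fin.last plen) ∈ c2.vertices
  meet1 : ∀ j, pvtx j ∈ c1.vertices → j = 0
  meet2 : ∀ j, pvtx j ∈ c2.vertices → j = Fin.last plen
  cmeet : ∀ v, v ∈ c1.vertices → v ∈ c2.vertices → plen = 0 ∧ v = pvtx 0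

namespace BowTie
variable {E : Set (Sym2 V)}

def pathEdges (B : BowTie V E) : Set (Sym2 V) :=
  {e | ∃ j : Fin B.plen, e = s(B.pvtx j.castSucc, B.pvtx j.succ)}

def edges (B : BowTie V E) : Set (Sym2 V) := B.c1.edges ∪ B.c2.edges ∪ B.pathEdges

def vertices (B : BowTie V E) : Set V := B.c1.vertices ∪ B.c2.vertices ∪ Set.range B.pvtx

/-- The connecting path degenerates to a single vertex. -/
def PathDegenerate (B : BowTie V E) : Prop := B.plen = 0

/-- The connecting path is a single edge. -/
def Monedge (B : BowTie V E) : Prop := B.plen = 1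

/-- At least one of the two odd cycles is a loop. -/
def Looped (B : BowTie V E) : Prop := B.c1.IsLoop ∨ B.c2.IsLoop

end BowTie

/-- The bow tie is an induced subgraph of the graph with loops `E`: every non-loop edge
of `E` joining two of its vertices belongs to it (when passing to an induced subgraph one is
allowed to delete loops). -/
def InducedBT {E : Set (Sym2 V)} (B : BowTie V E) : Prop :=
  ∀ e ∈ E, ¬ e.IsDiag → (∀ v ∈ e, v ∈ B.vertices) → e ∈ B.edges

end Polar


open Polar in
lemma split_of_even_dist {V : Type*} {r : ℕ} (vtx : ZMod (2 * r) → V) {a b : ℕ}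
    (hab : a < b) (hlt : b - a < 2 * r) (heven : (b - a) % 2 = 0)
    (h : vtx (a : ZMod (2 * r)) = vtx (b : ZMod (2 * r))) : Splits vtx := by
  refine ⟨(a : ZMod (2 * r)), (b - a) / 2, by omega, by omega, ?_⟩
  have hb : a + 2 * ((b - a) / 2) = b := by omega
  rw [show ((a : ZMod (2 * r)) + ((2 * ((b - a) / 2) : ℕ) : ZMod (2 * r))) = ((b : ℕ) : ZMod (2 * r)) by
    rw [← Nat.cast_add, hb]]
  exact h

open Polar in
/-- Lemma 3.4 (vertex repetitions in a non-split even closed walk): in a non-split even closed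
walk of length `2r` (`r ≥ 2`), a repeated vertex recurs exactly once (uniqueness of recurrence),
and the two occurrences are at odd distance (parity condition). Positions are `1,…,2r`. -/
theorem vertex_repetition_in_nonsplit_walk {V : Type*} (E : Set (Sym2 V)) {r : ℕ}
    (hr : 2 ≤ r) (vtx : ZMod (2 * r) → V)
    (hwalk : IsClosedWalk E vtx) (hns : NonSplit vtx)
    {j l : ℕ} (hj : 1 ≤ j) (hjl : j < l) (hl : l ≤ 2 * r)
    (hrep : vtx (j : ZMod (2 * r)) = vtx (l : ZMod (2 * r))) :
    (∀ k : ℕ, 1 ≤ k → k ≤ 2 * r → k ≠ j → k ≠ l →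
      vtx (k : ZMod (2 * r)) ≠ vtx (j : ZMod (2 * r))) ∧ (l - j) % 2 = 1 := by
  have key : ∀ a b : ℕ, 1 ≤ a → a < b → b ≤ 2 * r →
      vtx (a : ZMod (2 * r)) = vtx (b : ZMod (2 * r)) → (b - a) % 2 = 1 := by
    intro a b ha hab hb h
    by_contra hpar
    exact hns (split_of_even_dist vtx hab (by omega) (by omega) h)
  have hjl' := key j l hj hjl hl hrep
  refine ⟨?_, hjl'⟩
  intro k hk1 hk2 hkj hkl heq
  rcases lt_trichotomy k j with h1 | h1 | h1
  · have o1 := key k j hk1 h1 (by omega) heq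
    have o2 := key k l hk1 (by omega) hl (heq.trans hrep)
    omega
  · exact hkj h1
  · rcases lt_trichotomy k l with h2 | h2 | h2
    · have o1 := key j k hj h1 hk2 heq.symm
      have o2 := key k l hk1 h2 hl (heq.trans hrep)
      omega
    · exact hkl h2
    · have o1 := key j k hj h1 hk2 heq.symm
      have o2 := key l k (by omega) h2 hk2 (hrep.symm.trans heq.symm)
      omega
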